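/- Let ρ₁, …, ρ_N be quantum states on ℂ^d and let w : {1,…,N} × {1,…,N} → ℝ≥0 be a family of nonnegative weights (w_ij is the price of misidentifying state i as state j). Then strong duality holds between the minimax risk and the worst-case Bayesian risk: inf over N-outcome POVMs (P₁,…,P_N) of max_i ∑_j w_ij · Tr[ρᵢP_j] equals the maximum, over probability vectors (a₁,…,a_N) (aᵢ ≥ 0, ∑ᵢaᵢ = 1), of the infimum over N-outcome POVMs of ∑_i a_i ∑_j w_ij · Tr[ρᵢP_j]; moreover the outer maximum over priors is attained. -/

import Mathlib

open Matrix ComplexOrder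

/-- A quantum state on `ℂ^d`: a positive semidefinite matrix with unit trace. -/
def IsQState {d : ℕ} (ρ : Matrix (Fin d) (Fin d) ℂ) : Prop :=
  ρ.PosSemidef ∧ ρ.trace = 1

/-- An `N`-outcome POVM: a family of positive semidefinite matrices summing to the identity. -/
def IsPOVM {d N : ℕ} (P : Fin N → Matrix (Fin d) (Fin d) ℂ) : Prop :=
  (∀ i, (P i).PosSemidef) ∧ ∑ i, P i = 1

lemma trace_mul_re_nonneg' {d : ℕ} {A B : Matrix (Fin d) (Fin d) ℂ}
    (hA : A.PosSemidef) (hB : B.PosSemidef) : 0 ≤ ((A * B).trace).re := by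
  open scoped MatrixOrder in
  obtain ⟨C, rfl⟩ := CStarAlgebra.nonneg_iff_eq_star_mul_self.mp hB.nonneg
  rw [star_eq_conjTranspose]
  have h2 : (C * A * Cᴴ).PosSemidef := hA.mul_mul_conjTranspose_same C
  have h3 : (0:ℂ) ≤ (C * A * Cᴴ).trace := by
    exact h2.trace_nonneg
  have h1 : (A * (Cᴴ * C)).trace = (C * A * Cᴴ).trace := by
    rw [← Matrix.mul_assoc, Matrix.trace_mul_cycle]
  rw [h1]
  exact (Complex.le_def.mp h3).1

lemma psd_smul' {d : ℕ} {M : Matrix (Fin d) (Fin d) ℂ} (hM : M.PosSemidef) {r : ℝ}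
    (hr : 0 ≤ r) : (r • M).PosSemidef := by
  constructor
  · unfold Matrix.IsHermitian
    rw [Matrix.conjTranspose_smul, star_trivial, hM.1]
  · exact (hM.smul hr).2

/-- The risk vector of a POVM. -/
noncomputable def gfun {d N : ℕ} (ρ : Fin N → Matrix (Fin d) (Fin d) ℂ)
    (w : Fin N → Fin N → ℝ) (P : Fin N → Matrix (Fin d) (Fin d) ℂ) (i : Fin N) : ℝ :=
  ∑ j, w i j * ((ρ i * P j).trace.re)

/-- Strong duality for minimax discrimination with weights: the infimum over
POVMs of the worst-case risk `max_i ∑_j w_ij Tr[ρᵢP_j]` equals the maximum over priors of the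
Bayesian risk `inf_P ∑_i a_i ∑_j w_ij Tr[ρᵢP_j]`, and the maximum over priors is attained. -/
theorem minimax_risk_strong_duality
    {d N : ℕ} (hN : 0 < N)
    (ρ : Fin N → Matrix (Fin d) (Fin d) ℂ) (hρ : ∀ i, IsQState (ρ i))
    (w : Fin N → Fin N → ℝ) (hw : ∀ i j, 0 ≤ w i j) :
    ∃ a : Fin N → ℝ,
      IsGreatest
        { r : ℝ | ∃ b : Fin N → ℝ, (∀ i, 0 ≤ b i) ∧ (∑ i, b i) = 1 ∧
            r = sInf { s : ℝ | ∃ P : Fin N → Matrix (Fin d) (Fin d) ℂ, IsPOVM P ∧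
              s = ∑ i, b i * ∑ j, w i j * ((ρ i * P j).trace.re) } }
        (sInf { s : ℝ | ∃ P : Fin N → Matrix (Fin d) (Fin d) ℂ, IsPOVM P ∧
            s = ⨆ i, ∑ j, w i j * ((ρ i * P j).trace.re) }) ∧
      (∀ i, 0 ≤ a i) ∧ (∑ i, a i) = 1 ∧
      sInf { s : ℝ | ∃ P : Fin N → Matrix (Fin d) (Fin d) ℂ, IsPOVM P ∧
          s = ∑ i, a i * ∑ j, w i j * ((ρ i * P j).trace.re) } =
        sInf { s : ℝ | ∃ P : Fin N → Matrix (Fin d) (Fin d) ℂ, IsPOVM P ∧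
          s = ⨆ i, ∑ j, w i j * ((ρ i * P j).trace.re) } := by
  classical
  haveI : NeZero N := ⟨hN.ne'⟩
  haveI : Nonempty (Fin N) := ⟨⟨0, hN⟩⟩
  -- rewrite everything in terms of gfun
  have hGdef : ∀ (P : Fin N → Matrix (Fin d) (Fin d) ℂ) (i : Fin N),
      (∑ j, w i j * ((ρ i * P j).trace.re)) = gfun ρ w P i := fun _ _ => rfl
  simp only [hGdef]
  set Aset : (Fin N → ℝ) → Set ℝ := fun b =>
    { s : ℝ | ∃ P : Fin N → Matrix (Fin d) (Fin d) ℂ, IsPOVM P ∧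
        s = ∑ i, b i * gfun ρ w P i } with hAset
  set Bset : Set ℝ :=
    { s : ℝ | ∃ P : Fin N → Matrix (Fin d) (Fin d) ℂ, IsPOVM P ∧
        s = ⨆ i, gfun ρ w P i } with hBset
  -- a canonical POVM
  have hP₀ : IsPOVM (fun j : Fin N => if j = 0 then (1 : Matrix (Fin d) (Fin d) ℂ) else 0) := by
    constructor
    · intro j
      by_cases h : j = 0 <;> simp [h, Matrix.PosSemidef.one, Matrix.PosSemidef.zero]
    · simp
  -- risks are nonnegative
  have hgnn : ∀ P : Fin N → Matrix (Fin d) (Fin d) ℂ, IsPOVM P → ∀ i, 0 ≤ gfun ρ w P i := by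
    intro P hP i
    apply Finset.sum_nonneg
    intro j _
    exact mul_nonneg (hw i j) (trace_mul_re_nonneg' (hρ i).1 (hP.1 j))
  have hgbdd : ∀ P : Fin N → Matrix (Fin d) (Fin d) ℂ,
      BddAbove (Set.range (gfun ρ w P)) := fun P => Set.Finite.bddAbove (Set.finite_range _)
  have hBne : Bset.Nonempty := ⟨_, _, hP₀, rfl⟩
  have hBbd : BddBelow Bset := by
    refine ⟨0, ?_⟩
    rintro s ⟨P, hP, rfl⟩
    exact le_trans (hgnn P hP 0) (le_ciSup (hgbdd P) 0)
  have hAne : ∀ b : Fin N → ℝ, (Aset b).Nonempty := fun b => ⟨_, _, hP₀, rfl⟩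
  have hAbd : ∀ b : Fin N → ℝ, (∀ i, 0 ≤ b i) → BddBelow (Aset b) := by
    intro b hb
    refine ⟨0, ?_⟩
    rintro s ⟨P, hP, rfl⟩
    exact Finset.sum_nonneg fun i _ => mul_nonneg (hb i) (hgnn P hP i)
  set c : ℝ := sInf Bset with hc
  -- weak duality
  have hweak : ∀ b : Fin N → ℝ, (∀ i, 0 ≤ b i) → (∑ i, b i) = 1 → sInf (Aset b) ≤ c := by
    intro b hb hb1
    apply le_csInf hBne
    rintro s ⟨P, hP, rfl⟩
    refine le_trans (csInf_le (hAbd b hb) ⟨P, hP, rfl⟩) ?_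
    calc ∑ i, b i * gfun ρ w P i
        ≤ ∑ i, b i * (⨆ k, gfun ρ w P k) := by
          refine Finset.sum_le_sum fun i _ => ?_
          exact mul_le_mul_of_nonneg_left (le_ciSup (hgbdd P) i) (hb i)
      _ = ⨆ k, gfun ρ w P k := by rw [← Finset.sum_mul, hb1, one_mul]
  -- the set of achievable risk vectors
  set K : Set (Fin N → ℝ) :=
    { x | ∃ P : Fin N → Matrix (Fin d) (Fin d) ℂ, IsPOVM P ∧ x = gfun ρ w P } with hK
  have hKne : K.Nonempty := ⟨_, _, hP₀, rfl⟩
  have hKconv : Convex ℝ K := by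
    rintro x ⟨P, hP, rfl⟩ y ⟨Q, hQ, rfl⟩ s t hs ht hst
    refine ⟨fun j => s • P j + t • Q j, ⟨?_, ?_⟩, ?_⟩
    · intro j
      exact (psd_smul' (hP.1 j) hs).add (psd_smul' (hQ.1 j) ht)
    · rw [Finset.sum_add_distrib, ← Finset.smul_sum, ← Finset.smul_sum, hP.2, hQ.2,
        ← add_smul, hst, one_smul]
    · funext i
      simp only [Pi.add_apply, Pi.smul_apply, smul_eq_mul, gfun]
      rw [Finset.mul_sum, Finset.mul_sum, ← Finset.sum_add_distrib]
      refine Finset.sum_congr rfl fun j _ => ?_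
      rw [mul_add, Matrix.mul_smul, Matrix.mul_smul, Matrix.trace_add,
        Matrix.trace_smul, Matrix.trace_smul, Complex.add_re, Complex.smul_re,
        Complex.smul_re]
      simp only [smul_eq_mul]
      ring
  -- the open set of vectors strictly below c
  set O : Set (Fin N → ℝ) := Set.univ.pi (fun _ => Set.Iio c) with hO
  have hOmem : ∀ y : Fin N → ℝ, y ∈ O ↔ ∀ i, y i < c := by
    intro y; simp [hO, Set.mem_pi]
  have hOopen : IsOpen O := isOpen_set_pi Set.finite_univ (fun _ _ => isOpen_Iio)
  have hOconv : Convex ℝ O := convex_pi fun _ _ => convex_Iio c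
  have hdisj : Disjoint O K := by
    rw [Set.disjoint_left]
    rintro x hx ⟨P, hP, rfl⟩
    obtain ⟨i, hi⟩ := exists_eq_ciSup_of_finite (f := gfun ρ w P)
    have h1 : c ≤ gfun ρ w P i := hi ▸ csInf_le hBbd ⟨P, hP, rfl⟩
    exact absurd ((hOmem _).mp hx i) (not_lt.mpr h1)
  obtain ⟨f, u, hfO, hfK⟩ := geometric_hahn_banach_open hOconv hOopen hKconv hdisj
  set b : Fin N → ℝ := fun i => f (Pi.single i 1) with hb
  have hf_eq : ∀ x : Fin N → ℝ, f x = ∑ i, x i * b i := by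
    intro x
    conv_lhs => rw [pi_eq_sum_univ x]
    rw [map_sum]
    refine Finset.sum_congr rfl fun i _ => ?_
    have hsing : (fun j => if i = j then (1:ℝ) else 0) = Pi.single i 1 := by
      funext j
      simp [Pi.single_apply, eq_comm]
    rw [hsing, f.map_smul, smul_eq_mul]
  have hconst : ∀ ε : ℝ, f (fun _ => c - ε) = (c - ε) * ∑ i, b i := by
    intro ε
    rw [hf_eq, Finset.mul_sum]
  have hconstO : ∀ ε : ℝ, 0 < ε → (fun _ : Fin N => c - ε) ∈ O := by
    intro ε hε
    rw [hOmem]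
    intro i
    linarith
  -- all coefficients nonnegative
  have hbnn : ∀ i, 0 ≤ b i := by
    intro i
    by_contra h
    push_neg at h
    set t : ℝ := max 0 ((u - f (fun _ => c - 1)) / (-b i)) with ht
    have ht0 : 0 ≤ t := le_max_left _ _
    have hyO : ((fun _ : Fin N => c - 1) - t • (Pi.single i 1 : Fin N → ℝ)) ∈ O := by
      rw [hOmem]
      intro j
      simp only [Pi.sub_apply, Pi.smul_apply, smul_eq_mul]
      rcases eq_or_ne j i with rfl | hji
      · have : 0 ≤ t * 1 := by nlinarith
        simp only [Pi.single_eq_same]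
        linarith
      · simp only [Pi.single_eq_of_ne hji, mul_zero]
        linarith
    have hlt := hfO _ hyO
    rw [map_sub, f.map_smul, smul_eq_mul] at hlt
    have hge : t * (-b i) ≥ u - f (fun _ => c - 1) := by
      rcases le_or_gt (u - f (fun _ => c - 1)) 0 with h' | h'
      · nlinarith
      · have : (u - f (fun _ => c - 1)) / (-b i) ≤ t := le_max_right _ _
        have hbi : 0 < -b i := by linarith
        calc u - f (fun _ => c - 1) = ((u - f (fun _ => c - 1)) / (-b i)) * (-b i) :=
              (div_mul_cancel₀ _ (by linarith : (-b i) ≠ 0)).symm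
          _ ≤ t * (-b i) := by nlinarith
    have : f (Pi.single i 1) = b i := rfl
    nlinarith [hlt, hge]
  set S : ℝ := ∑ i, b i with hS
  have hSnn : 0 ≤ S := Finset.sum_nonneg fun i _ => hbnn i
  have hSpos : 0 < S := by
    rcases hSnn.lt_or_eq with h | h
    · exact h
    · exfalso
      have hb0 : ∀ i, b i = 0 := by
        intro i
        have := (Finset.sum_eq_zero_iff_of_nonneg (fun i _ => hbnn i)).mp h.symm
        exact this i (Finset.mem_univ i)
      have hf0 : ∀ x : Fin N → ℝ, f x = 0 := by
        intro x
        rw [hf_eq]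
        simp [hb0]
      have h1 := hfO _ (hconstO 1 one_pos)
      rw [hf0] at h1
      obtain ⟨x, hxK⟩ := hKne
      have h2 := hfK x hxK
      rw [hf0] at h2
      linarith
  -- c * S ≤ u
  have hcSu : c * S ≤ u := by
    by_contra h
    push_neg at h
    set ε : ℝ := (c * S - u) / (2 * S) with hε
    have hεpos : 0 < ε := div_pos (by linarith) (by linarith)
    have h1 := hfO _ (hconstO ε hεpos)
    rw [hconst] at h1
    have : (c - ε) * S = c * S - ε * S := by ring
    have hεS : ε * S = (c * S - u) / 2 := by
      rw [hε]; field_simp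
    nlinarith
  -- define the optimal prior
  refine ⟨fun i => b i / S, ?_⟩
  have hann : ∀ i, 0 ≤ b i / S := fun i => div_nonneg (hbnn i) hSnn
  have hasum : (∑ i, b i / S) = 1 := by
    rw [← Finset.sum_div, ← hS, div_self hSpos.ne']
  have hstrong : c ≤ sInf (Aset (fun i => b i / S)) := by
    apply le_csInf (hAne _)
    rintro s ⟨P, hP, rfl⟩
    have hx : gfun ρ w P ∈ K := ⟨P, hP, rfl⟩
    have hu := hfK _ hx
    rw [hf_eq] at hu
    have heq : (∑ i, (b i / S) * gfun ρ w P i) = (∑ i, gfun ρ w P i * b i) / S := by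
      rw [Finset.sum_div]
      refine Finset.sum_congr rfl fun i _ => ?_
      ring
    rw [heq, le_div_iff₀ hSpos]
    calc c * S ≤ u := hcSu
      _ ≤ ∑ i, gfun ρ w P i * b i := hu
  have heq : sInf (Aset (fun i => b i / S)) = c :=
    le_antisymm (hweak _ hann hasum) hstrong
  refine ⟨⟨⟨fun i => b i / S, hann, hasum, heq.symm⟩, ?_⟩, hann, hasum, heq⟩
  rintro r ⟨b', hb'0, hb'1, rfl⟩
  exact hweak b' hb'0 hb'1
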